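/- (Outer bound, single model) Let Q be a full-support distribution on n categories, ε ∈ (0,1), and X a dataset of p samples with empirical distribution P̂(X) = P̂^ℓ. If D(P̂(X)||Q) ≥ (1/p)·log(1/ε) + (2n/p)·log(p+1), then for any ordering P̂^1, P̂^2, … of types with P_Q(P̂^1) ≤ P_Q(P̂^2) ≤ …, we have P_Q({P̂^1, …, P̂^ℓ}) ≤ ε (i.e., X is contaminated at significance level ε). -/

import Mathlib

open scoped Classical

/-- `P` is a probability mass function on `n` categories. -/
def isPMF {n : ℕ} (P : Fin n → ℝ) : Prop :=
  (∀ i, 0 ≤ P i) ∧ ∑ i, P i = 1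

/-- Kullback–Leibler divergence `D(P‖Q) = ∑ i, P i * log (P i / Q i)`. -/
noncomputable def KL {n : ℕ} (P Q : Fin n → ℝ) : ℝ :=
  ∑ i, P i * Real.log (P i / Q i)

/-- Empirical distribution (type) of the sequence `x` of `p` samples over `n` categories. -/
noncomputable def emp {n p : ℕ} (x : Fin p → Fin n) (i : Fin n) : ℝ :=
  ((Finset.univ.filter (fun j => x j = i)).card : ℝ) / p

/-- Probability of observing the sequence `x` under `p` i.i.d. draws from `Q`. -/
noncomputable def seqProb {n p : ℕ} (Q : Fin n → ℝ) (x : Fin p → Fin n) : ℝ :=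
  ∏ j, Q (x j)

/-- Probability, under `p` i.i.d. draws from `Q`, that the empirical distribution
equals `P` exactly. -/
noncomputable def typeProb (p : ℕ) {n : ℕ} (Q : Fin n → ℝ) (P : Fin n → ℝ) : ℝ :=
  ∑ x : Fin p → Fin n, if emp x = P then seqProb Q x else 0

/-- Probability, under `p` i.i.d. draws from `Q`, that the empirical distribution
lies in the set `S`. -/
noncomputable def setProb (p : ℕ) {n : ℕ} (Q : Fin n → ℝ) (S : Set (Fin n → ℝ)) : ℝ :=
  ∑ x : Fin p → Fin n, if emp x ∈ S then seqProb Q x else 0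

lemma emp_nonneg {n p : ℕ} (x : Fin p → Fin n) (i : Fin n) : 0 ≤ emp x i := by
  unfold emp; positivity

lemma count_eq {n p : ℕ} (hp : 0 < p) (x : Fin p → Fin n) (i : Fin n) :
    (((Finset.univ.filter (fun j => x j = i)).card : ℝ)) = p * emp x i := by
  have : (p:ℝ) ≠ 0 := by positivity
  unfold emp; field_simp

lemma seqProb_eq_prod_pow {n p : ℕ} (Q : Fin n → ℝ) (x : Fin p → Fin n) :
    seqProb Q x = ∏ i, Q i ^ (Finset.univ.filter (fun j => x j = i)).card := by
  rw [seqProb, ← Finset.prod_fiberwise' Finset.univ x Q]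
  exact Finset.prod_congr rfl fun i _ => (Finset.prod_const _)

lemma seqProb_eq_exp {n p : ℕ} (hp : 0 < p) (Q : Fin n → ℝ) (x : Fin p → Fin n)
    (hQ : ∀ i, 0 < Q i ∨ emp x i = 0) :
    seqProb Q x = Real.exp (p * ∑ i, emp x i * Real.log (Q i)) := by
  rw [seqProb_eq_prod_pow, Finset.mul_sum, Real.exp_sum]
  refine Finset.prod_congr rfl fun i _ => ?_
  set c := (Finset.univ.filter (fun j => x j = i)).card with hc
  have hce : (c:ℝ) = p * emp x i := count_eq hp x i
  rcases hQ i with h | h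
  · rw [show (p:ℝ) * (emp x i * Real.log (Q i)) = (c:ℝ) * Real.log (Q i) by
      rw [hce]; ring]
    rw [← Real.log_pow, Real.exp_log (by positivity)]
  · have hc0 : c = 0 := by
      have : (c:ℝ) = 0 := by rw [hce, h]; ring
      exact_mod_cast this
    simp [hc0, h]

lemma emp_sum {n p : ℕ} (hp : 0 < p) (x : Fin p → Fin n) : ∑ i, emp x i = 1 := by
  have h : ∑ i : Fin n, ((Finset.univ.filter (fun j => x j = i)).card : ℝ) = p := by
    have := Finset.sum_fiberwise' (Finset.univ : Finset (Fin p)) x (fun _ : Fin n => (1:ℝ))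
    simpa using this
  have hp' : (p:ℝ) ≠ 0 := by positivity
  unfold emp
  rw [← Finset.sum_div, h, div_self hp']

lemma typeProb_eq {n p : ℕ} (hp : 0 < p) (Q : Fin n → ℝ) (P : Fin n → ℝ)
    (hQ : ∀ i, 0 < Q i ∨ P i = 0) :
    typeProb p Q P = ((Finset.univ.filter (fun y : Fin p → Fin n => emp y = P)).card : ℝ) *
      Real.exp (p * ∑ i, P i * Real.log (Q i)) := by
  rw [typeProb, ← Finset.sum_filter]
  rw [Finset.sum_congr rfl (fun y hy => ?_), Finset.sum_const, nsmul_eq_mul]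
  have hy' : emp y = P := (Finset.mem_filter.mp hy).2
  rw [← hy'] at hQ ⊢
  exact seqProb_eq_exp hp Q y hQ

lemma typeProb_le_exp {n p : ℕ} (hp : 0 < p) (Q : Fin n → ℝ) (hQpos : ∀ i, 0 < Q i)
    (P : Fin n → ℝ) (x₀ : Fin p → Fin n) (hP : emp x₀ = P) :
    typeProb p Q P ≤ Real.exp (-(p * KL P Q)) := by
  have hPnn : ∀ i, 0 ≤ P i := fun i => hP ▸ emp_nonneg x₀ i
  have hPsum : ∑ i, P i = 1 := hP ▸ emp_sum hp x₀
  set N : ℕ := (Finset.univ.filter (fun y : Fin p → Fin n => emp y = P)).card with hN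
  -- typeProb p P P ≤ 1
  have hself : (N : ℝ) * Real.exp (p * ∑ i, P i * Real.log (P i)) ≤ 1 := by
    rw [← typeProb_eq hp P P (fun i => (hPnn i).lt_or_eq.imp id Eq.symm)]
    have h1 : typeProb p P P ≤ ∑ x : Fin p → Fin n, seqProb P x := by
      refine Finset.sum_le_sum fun x _ => ?_
      split_ifs with h
      · exact le_refl _
      · exact Finset.prod_nonneg fun j _ => hPnn (x j)
    have h2 : ∑ x : Fin p → Fin n, seqProb P x = 1 := by
      have := (Fintype.sum_pow P p).symm
      simp only [seqProb]
      rw [this, hPsum, one_pow]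
    linarith
  have hEpos : (0:ℝ) < Real.exp (p * ∑ i, P i * Real.log (P i)) := Real.exp_pos _
  have hNle : (N : ℝ) ≤ Real.exp (-(p * ∑ i, P i * Real.log (P i))) := by
    rw [Real.exp_neg, ← one_div, le_div_iff₀ hEpos]
    exact hself
  have hKL : KL P Q = (∑ i, P i * Real.log (P i)) - ∑ i, P i * Real.log (Q i) := by
    rw [KL, ← Finset.sum_sub_distrib]
    refine Finset.sum_congr rfl fun i _ => ?_
    rcases (hPnn i).lt_or_eq with h | h
    · rw [Real.log_div (ne_of_gt h) (ne_of_gt (hQpos i)), mul_sub]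
    · simp [← h]
  rw [typeProb_eq hp Q P (fun i => Or.inl (hQpos i)), hKL]
  calc (N:ℝ) * Real.exp (p * ∑ i, P i * Real.log (Q i))
      ≤ Real.exp (-(p * ∑ i, P i * Real.log (P i))) *
        Real.exp (p * ∑ i, P i * Real.log (Q i)) :=
        mul_le_mul_of_nonneg_right hNle (Real.exp_pos _).le
    _ = Real.exp (-(p * ((∑ i, P i * Real.log (P i)) - ∑ i, P i * Real.log (Q i)))) := by
        rw [← Real.exp_add]; congr 1; ring

lemma setProb_coe {n p : ℕ} (Q : Fin n → ℝ) (V : Finset (Fin n → ℝ)) :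
    setProb p Q ↑V = ∑ P ∈ V, typeProb p Q P := by
  rw [setProb]
  simp only [typeProb]
  rw [Finset.sum_comm]
  refine Finset.sum_congr rfl fun x _ => ?_
  rw [Finset.sum_ite_eq (V) (emp x) (fun _ => seqProb Q x)]
  simp

lemma typeProb_nonneg {n p : ℕ} (Q : Fin n → ℝ) (hQpos : ∀ i, 0 < Q i) (P : Fin n → ℝ) :
    0 ≤ typeProb p Q P := by
  refine Finset.sum_nonneg fun x _ => ?_
  split_ifs
  · exact Finset.prod_nonneg fun j _ => (hQpos (x j)).le
  · exact le_refl _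

lemma card_types_le {n p : ℕ} (hp : 0 < p) (V : Finset (Fin n → ℝ))
    (hV : ∀ P ∈ V, ∃ x : Fin p → Fin n, emp x = P) : V.card ≤ (p + 1) ^ n := by
  classical
  set f : (Fin n → ℝ) → (Fin n → Fin (p + 1)) :=
    fun P i => ⟨min (⌊P i * p⌋₊) p, Nat.lt_succ_of_le (min_le_right _ _)⟩ with hf
  have key : ∀ P ∈ V, ∀ i, P i = ((f P i : ℕ) : ℝ) / p := by
    intro P hP i
    obtain ⟨x, hx⟩ := hV P hP
    have hc : ((Finset.univ.filter (fun j => x j = i)).card : ℝ) = p * emp x i :=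
      count_eq hp x i
    set c : ℕ := (Finset.univ.filter (fun j => x j = i)).card with hcdef
    have hcp : c ≤ p := by
      calc c ≤ (Finset.univ : Finset (Fin p)).card := Finset.card_filter_le _ _
        _ = p := by simp
    have hPc : P i * p = (c : ℝ) := by rw [← hx, hc]; ring
    have hfloor : ⌊P i * p⌋₊ = c := by rw [hPc, Nat.floor_natCast]
    have hfv : (f P i : ℕ) = c := by simp [hf, hfloor, hcp]
    rw [hfv, ← hPc, mul_div_assoc, div_self (by positivity : (p:ℝ) ≠ 0), mul_one]
  have hinj : Set.InjOn f ↑V := by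
    intro P hP P' hP' hEq
    funext i
    rw [key P hP i, key P' hP' i, hEq]
  calc V.card ≤ (Finset.univ : Finset (Fin n → Fin (p + 1))).card :=
        Finset.card_le_card_of_injOn f (fun _ _ => Finset.mem_univ _) hinj
    _ = (p + 1) ^ n := by simp [Finset.card_univ]


theorem outer_bound_contaminated {n p L : ℕ} (Q : Fin n → ℝ) (ε : ℝ)
    (X : Fin p → Fin n) (T : Fin (L + 1) → (Fin n → ℝ))
    (hp : 0 < p) (hQ : isPMF Q) (hQpos : ∀ i, 0 < Q i)
    (hε0 : 0 < ε) (hε1 : ε < 1)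
    (htype : ∀ i, ∃ x : Fin p → Fin n, emp x = T i)
    (hmono : ∀ i j : Fin (L + 1), i ≤ j → typeProb p Q (T i) ≤ typeProb p Q (T j))
    (hlast : T (Fin.last L) = emp X)
    (hD : KL (emp X) Q ≥
      (1 / (p : ℝ)) * Real.log (1 / ε) + (2 * (n : ℝ) / p) * Real.log ((p : ℝ) + 1)) :
    setProb p Q (Set.range T) ≤ ε := by
  classical
  set V : Finset (Fin n → ℝ) := Finset.image T Finset.univ with hV
  have hrange : Set.range T = ↑V := by
    rw [hV, Finset.coe_image, Finset.coe_univ, Set.image_univ]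
  rw [hrange, setProb_coe]
  have hpR : (0:ℝ) < p := by exact_mod_cast hp
  set D : ℝ := KL (emp X) Q with hDdef
  set A : ℝ := Real.log ((p : ℝ) + 1) with hA
  have hA0 : 0 ≤ A := Real.log_nonneg (by linarith)
  -- each type's prob is at most that of emp X
  have hmax : ∀ P ∈ V, typeProb p Q P ≤ typeProb p Q (emp X) := by
    intro P hP
    obtain ⟨i, _, hi⟩ := Finset.mem_image.mp hP
    rw [← hi, ← hlast]
    exact hmono i (Fin.last L) (Fin.le_last i)
  have hXle : typeProb p Q (emp X) ≤ Real.exp (-(p * D)) :=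
    typeProb_le_exp hp Q hQpos (emp X) X rfl
  have hcard : (V.card : ℝ) ≤ ((p + 1 : ℕ) : ℝ) ^ n := by
    have := card_types_le hp V (by
      intro P hP
      obtain ⟨i, _, hi⟩ := Finset.mem_image.mp hP
      exact hi ▸ htype i)
    exact_mod_cast this
  set B : ℝ := ((p : ℝ) + 1) ^ n with hB
  have hB1 : (1:ℝ) ≤ B := one_le_pow₀ (by linarith)
  -- p * D ≥ -log ε + 2 n A
  have hlog : -Real.log ε + 2 * (n:ℝ) * A ≤ p * D := by
    have hinv : Real.log (1 / ε) = -Real.log ε := by rw [one_div, Real.log_inv]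
    rw [hinv, ge_iff_le] at hD
    have h := mul_le_mul_of_nonneg_left hD hpR.le
    have hpne : (p:ℝ) ≠ 0 := ne_of_gt hpR
    rw [mul_add, show (p:ℝ) * (1/p * -Real.log ε) = -Real.log ε from by field_simp; try ring,
      show (p:ℝ) * (2*(n:ℝ)/p*A) = 2*n*A from by field_simp; try ring] at h
    linarith
  have hexp : Real.exp (-(p * D)) ≤ ε / B ^ 2 := by
    have h1 : Real.exp (-(p * D)) ≤ Real.exp (Real.log ε - 2 * (n:ℝ) * A) := by
      apply Real.exp_le_exp.mpr; linarith
    have h2 : Real.exp (Real.log ε - 2 * (n:ℝ) * A) = ε / B ^ 2 := by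
      rw [Real.exp_sub, Real.exp_log hε0]
      congr 1
      have : 2 * (n:ℝ) * A = ((2 * n : ℕ) : ℝ) * A := by push_cast; ring
      rw [this, Real.exp_nat_mul, Real.exp_log (by linarith : (0:ℝ) < (p:ℝ) + 1)]
      rw [hB, ← pow_mul, two_mul, mul_comm n 2, ← two_mul]
    linarith [h2 ▸ h1]
  have hBpos : (0:ℝ) < B := by linarith
  calc ∑ P ∈ V, typeProb p Q P ≤ ∑ P ∈ V, typeProb p Q (emp X) :=
        Finset.sum_le_sum hmax
    _ = (V.card : ℝ) * typeProb p Q (emp X) := by rw [Finset.sum_const, nsmul_eq_mul]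
    _ ≤ B * Real.exp (-(p * D)) := by
        apply mul_le_mul _ hXle (typeProb_nonneg Q hQpos _) (by linarith)
        · rw [hB]; push_cast at hcard ⊢; exact hcard
    _ ≤ B * (ε / B ^ 2) := by
        apply mul_le_mul_of_nonneg_left hexp (by linarith)
    _ = ε / B := by field_simp
    _ ≤ ε := div_le_self hε0.le hB1
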